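/- The prefix relation on partial FS-runs is well-defined: if σ' ↔* σ and σ is a prefix of μ (with μ a firing sequence), then there exists a firing sequence μ' such that σ' is a prefix of μ' and μ' ↔* μ. -/
import Mathlib


structure Net (S T : Type) where
  pre : T → S → ℕ
  post : T → S → ℕ
  M0 : S → ℕ

namespace Net

variable {S T : Type}

/-- `t` is enabled in marking `M`: all tokens in its preplaces are available. -/
def enabled (N : Net S T) (t : T) (M : S → ℕ) : Prop := ∀ s, N.pre t s ≤ M s

/-- The marking obtained by firing `t` from `M`. -/
def fire (N : Net S T) (M : S → ℕ) (t : T) : S → ℕ :=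
  fun s => M s - N.pre t s + N.post t s

/-- `Fires N M σ M'` : the word `σ` of transitions can fire from `M`, leading to `M'`. -/
inductive Fires (N : Net S T) : (S → ℕ) → List T → (S → ℕ) → Prop
  | nil (M : S → ℕ) : Fires N M [] M
  | cons {M M' : S → ℕ} {t : T} {σ : List T} (h : N.enabled t M)
      (h' : Fires N (N.fire M t) σ M') : Fires N M (t :: σ) M'

/-- `σ` is a firing sequence of `N`. -/
def FS (N : Net S T) (σ : List T) : Prop := ∃ M, N.Fires N.M0 σ M

/-- `M` is reachable from the initial marking. -/
def Reachable (N : Net S T) (M : S → ℕ) : Prop := ∃ σ, N.Fires N.M0 σ M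

/-- The step (multiset) `{t,u}` is enabled in `M`. -/
def enabledPair (N : Net S T) (t u : T) (M : S → ℕ) : Prop :=
  ∀ s, N.pre t s + N.pre u s ≤ M s

/-- Binary-conflict-freeness. -/
def bcf (N : Net S T) : Prop :=
  ∀ M, N.Reachable M → ∀ t u, t ≠ u → N.enabled t M → N.enabled u M → N.enabledPair t u M

/-- Adjacency of firing sequences: exchange of two consecutive transitions forming an enabled step. -/
def Adjacent (N : Net S T) (σ ρ : List T) : Prop :=
  N.FS σ ∧ N.FS ρ ∧ ∃ σ₁ t u σ₂ M, σ = σ₁ ++ t :: u :: σ₂ ∧ ρ = σ₁ ++ u :: t :: σ₂ ∧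
    N.Fires N.M0 σ₁ M ∧ N.enabledPair t u M

/-- Reflexive-transitive closure of adjacency. -/
def AdjStar (N : Net S T) : List T → List T → Prop := Relation.ReflTransGen N.Adjacent

/-- Prefix relation on partial FS-runs, on representatives: `[σ] ≤ [ρ]`. -/
def runLe (N : Net S T) (σ ρ : List T) : Prop := ∃ μ, σ <+: μ ∧ N.AdjStar μ ρ

end Net

lemma fires_append {S T : Type} (N : Net S T) {M M' M'' : S → ℕ} {σ ρ : List T}
    (h1 : N.Fires M σ M') (h2 : N.Fires M' ρ M'') : N.Fires M (σ ++ ρ) M'' := by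
  induction h1 with
  | nil => simpa using h2
  | cons h h' ih => exact Net.Fires.cons h (ih h2)

lemma fires_split {S T : Type} (N : Net S T) {M M'' : S → ℕ} {σ ρ : List T}
    (h : N.Fires M (σ ++ ρ) M'') : ∃ M', N.Fires M σ M' ∧ N.Fires M' ρ M'' := by
  induction σ generalizing M with
  | nil => exact ⟨M, Net.Fires.nil M, h⟩
  | cons t σ ih =>
    cases h with
    | cons he h' =>
      obtain ⟨M', h1, h2⟩ := ih h'
      exact ⟨M', Net.Fires.cons he h1, h2⟩

lemma fires_det {S T : Type} (N : Net S T) {M M₁ M₂ : S → ℕ} {σ : List T}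
    (h1 : N.Fires M σ M₁) (h2 : N.Fires M σ M₂) : M₁ = M₂ := by
  induction h1 generalizing M₂ with
  | nil => cases h2; rfl
  | cons he h' ih => cases h2 with | cons _ h2' => exact ih h2'

lemma swap_fires {S T : Type} (N : Net S T) {M M' : S → ℕ} {t u : T} {σ₂ : List T}
    (hpair : N.enabledPair t u M) (h : N.Fires M (u :: t :: σ₂) M') :
    N.Fires M (t :: u :: σ₂) M' := by
  cases h with
  | cons heu h' =>
    cases h' with
    | cons het h'' =>
      have het' : N.enabled t M := fun s => le_trans (by linarith [hpair s]) le_rfl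
      have heu' : N.enabled u (N.fire M t) := by
        intro s; have := hpair s
        simp only [Net.fire]; omega
      have heq : N.fire (N.fire M t) u = N.fire (N.fire M u) t := by
        funext s; have := hpair s
        simp only [Net.fire]; omega
      exact Net.Fires.cons het' (Net.Fires.cons heu' (heq ▸ h''))

lemma adj_step {S T : Type} (N : Net S T) {σ' τ μ : List T}
    (hadj : N.Adjacent σ' τ) (hp : τ <+: μ) (hμ : N.FS μ) :
    ∃ μ', N.FS μ' ∧ σ' <+: μ' ∧ N.Adjacent μ' μ := by
  obtain ⟨hfs1, hfs2, σ₁, t, u, σ₂, M, hσ', hτ, hfir, hpair⟩ := hadj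
  obtain ⟨ρ, hρ⟩ := hp
  obtain ⟨Mf, hMf⟩ := hμ
  refine ⟨σ' ++ ρ, ?_, ⟨ρ, rfl⟩, ?_⟩
  · -- FS (σ' ++ ρ)
    subst hρ hτ hσ'
    rw [List.append_assoc] at hMf
    obtain ⟨M₁, hM1, hM2⟩ := fires_split N hMf
    have : M₁ = M := fires_det N hM1 hfir
    subst this
    simp only [List.cons_append] at hM2
    have := swap_fires N hpair hM2
    exact ⟨Mf, by rw [List.append_assoc]; simpa using fires_append N hM1 this⟩
  · refine ⟨?_, ⟨Mf, hMf⟩, σ₁, t, u, σ₂ ++ ρ, M, ?_, ?_, hfir, hpair⟩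
    · -- FS (σ' ++ ρ) again; reuse above? restate
      subst hρ hτ hσ'
      rw [List.append_assoc] at hMf
      obtain ⟨M₁, hM1, hM2⟩ := fires_split N hMf
      have : M₁ = M := fires_det N hM1 hfir
      subst this
      simp only [List.cons_append] at hM2
      cases hM2 with
      | cons he h' =>
        cases h' with
        | cons he2 h'' =>
          have := swap_fires N hpair (Net.Fires.cons he (Net.Fires.cons he2 h''))
          exact ⟨Mf, by rw [List.append_assoc]; simpa using fires_append N hM1 this⟩
    · subst hσ'; simp
    · subst hτ hρ; simp

/-- well-definedness of the prefix relation on partial FS-runs: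
if `σ' ↔* σ` and `σ` is a prefix of the firing sequence `μ`, then there is a firing
sequence `μ'` with `σ'` a prefix of `μ'` and `μ' ↔* μ`. -/
theorem stmt9 {S T : Type} (N : Net S T) (σ' σ μ : List T)
    (h : N.AdjStar σ' σ) (hp : σ <+: μ) (hμ : N.FS μ) :
    ∃ μ', N.FS μ' ∧ σ' <+: μ' ∧ N.AdjStar μ' μ := by
  induction h using Relation.ReflTransGen.head_induction_on with
  | refl => exact ⟨μ, hμ, hp, Relation.ReflTransGen.refl⟩
  | head hadj _ ih =>
    obtain ⟨μ'', hfs, hp'', hstar⟩ := ih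
    obtain ⟨μ', hfs', hp', hadj'⟩ := adj_step N hadj hp'' hfs
    exact ⟨μ', hfs', hp', Relation.ReflTransGen.head hadj' hstar⟩
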